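/- arXiv:2504.01107 — 3 statements merged into one kernel-verified Lean document; each statement's English description precedes it below -/
import Mathlib

section
/- Let γ = γ_{m₁,…,m_r} ∈ S_m. Let σ ∈ S_NC(m₁,…,m_r) and let π ∈ S_m satisfy π ≤ σ⁻¹γ and π ≲ γ. Then |σ| + |σ⁻¹γπ⁻¹| = |γπ⁻¹| + 2(#(π ∨ γ) − 1), and moreover |γπ⁻¹| + 2(#(γπ⁻¹) − #(σ ∨ γπ⁻¹)) ≤ |σ| + |σ⁻¹γπ⁻¹|, with equality if and only if for every block B of σ ∨ γπ⁻¹ the restriction σ|_B is non-crossing with respect to (γπ⁻¹)|_B. -/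
open Equiv

namespace ThirdOrderFree

variable {α : Type*}

/-- The setoid whose classes are the cycles (orbits) of a permutation. -/
def sameCycleSetoid (σ : Perm α) : Setoid α :=
  ⟨σ.SameCycle,
    ⟨fun x => Equiv.Perm.SameCycle.refl σ x, fun h => h.symm, fun h h' => h.trans h'⟩⟩

/-- Number of cycles (orbits, including fixed points) of a permutation. -/
noncomputable def numCycles (σ : Perm α) : ℕ :=
  Nat.card (Quotient (sameCycleSetoid σ))

/-- The length `|σ| = n - #(σ)`. -/
noncomputable def len (σ : Perm α) : ℕ :=
  Nat.card α - numCycles σ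

/-- Join of the cycle partitions of two permutations. -/
def joinSetoid (π σ : Perm α) : Setoid α :=
  sameCycleSetoid π ⊔ sameCycleSetoid σ

/-- Number of blocks of `π ∨ σ`. -/
noncomputable def numBlocks (π σ : Perm α) : ℕ :=
  Nat.card (Quotient (joinSetoid π σ))

/-- `π ∨ σ` is the one-block partition. -/
def JoinTop (π σ : Perm α) : Prop :=
  ∀ x y : α, (joinSetoid π σ).r x y

/-- `π` is a non-crossing (annular) permutation with respect to `γ`. -/
def SNC (γ π : Perm α) : Prop :=
  JoinTop π γ ∧
    numCycles π + numCycles (π⁻¹ * γ) + numCycles γ = Nat.card α + 2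

/-- `τ` separates the points of `N`: no cycle of `τ` contains two distinct points of `N`. -/
def Separates (τ : Perm α) (N : Set α) : Prop :=
  ∀ x ∈ N, ∀ y ∈ N, τ.SameCycle x y → x = y

/-- The first-return map of `σ` on the set `{x | p x}`. -/
noncomputable def firstReturn (σ : Perm α) (p : α → Prop) (x : α) : α :=
  (σ ^ sInf {k : ℕ | 0 < k ∧ p ((σ ^ k) x)}) x

open Classical in
/-- The restriction of `σ` to `{x | p x}`: the unique permutation agreeing with the
first-return map (it exists whenever `α` is finite). -/
noncomputable def restrictPerm (σ : Perm α) (p : α → Prop) : Perm {x // p x} :=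
  if h : ∃ e : Perm {x // p x}, ∀ x : {x // p x}, (e x : α) = firstReturn σ p (x : α)
  then h.choose else 1

/-- `π ≤ σ` : each cycle of `π` is contained in a cycle of `σ` and on each cycle of
`σ` the restriction of `π` is a non-crossing permutation of that cycle. -/
def le' (π σ : Perm α) : Prop :=
  (∀ x y : α, π.SameCycle x y → σ.SameCycle x y) ∧
  ∀ x : α,
    numCycles (restrictPerm π (σ.SameCycle x)) +
      numCycles ((restrictPerm π (σ.SameCycle x))⁻¹ * restrictPerm σ (σ.SameCycle x)) =
      Nat.card {y // σ.SameCycle x y} + 1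

/-- `π ≲ σ` : on each block of `π ∨ σ`, `π` is annular non-crossing w.r.t. `σ`. -/
def ncRel (π σ : Perm α) : Prop :=
  ∀ x : α,
    SNC (restrictPerm σ ((joinSetoid π σ).r x)) (restrictPerm π ((joinSetoid π σ).r x))

/-- The permutation of `Σ i, Fin (n i)` rotating each block: the product of the
directed cycles `T i` of lengths `n i`. -/
def blockRotate {ι : Type*} (n : ι → ℕ) : Perm ((i : ι) × Fin (n i)) :=
  Equiv.sigmaCongrRight fun i => finRotate (n i)

/-- The first elements of the blocks. -/
def zeroSection {ι : Type*} (n : ι → ℕ) (hn : ∀ i, 0 < n i) :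
    ι ≃ {x : (i : ι) × Fin (n i) // x.2.val = 0} where
  toFun i := ⟨⟨i, ⟨0, hn i⟩⟩, rfl⟩
  invFun x := x.1.1
  left_inv i := rfl
  right_inv := fun x => by
    obtain ⟨⟨i, j⟩, hj⟩ := x
    exact Subtype.ext (congrArg (Sigma.mk i) (Fin.ext hj.symm))

/-- `π_{\vec n}` : merge the blocks `T i` along the cycles of `π`; within a block it
moves forward, and the last element of block `i` is sent to the first element of
block `π i`. -/
def mergePerm {ι : Type*} (n : ι → ℕ) (hn : ∀ i, 0 < n i) (π : Perm ι) :
    Perm ((i : ι) × Fin (n i)) :=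
  (π.extendDomain (zeroSection n hn)) * blockRotate n



/-! ### Auxiliary machinery -/

section Aux

lemma scs_rel {a : Perm α} {x y : α} : (sameCycleSetoid a) x y ↔ a.SameCycle x y := Iff.rfl

lemma scs_apply (a : Perm α) (u : α) : (sameCycleSetoid a) u (a u) :=
  ⟨1, by simp⟩

lemma scs_le_of_step {a : Perm α} {t : Setoid α} (h : ∀ u, t u (a u)) :
    sameCycleSetoid a ≤ t := by
  have key : ∀ (n : ℕ) (u : α), t u ((a ^ n) u) := by
    intro n
    induction n with
    | zero => intro u; simpa using Setoid.refl' t u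
    | succ n ih =>
      intro u
      have h1 : t ((a ^ n) u) ((a ^ (n + 1)) u) := by
        have h2 := h ((a ^ n) u)
        have h3 : (a ^ (n + 1)) u = a ((a ^ n) u) := by
          rw [pow_succ', Equiv.Perm.mul_apply]
        rwa [h3]
      exact Setoid.trans' t (ih u) h1
  intro u v huv
  obtain ⟨k, hk⟩ := huv
  match k, hk with
  | Int.ofNat n, hk =>
    have h4 : (a ^ n) u = v := by rw [← hk]; simp
    exact h4 ▸ key n u
  | Int.negSucc n, hk =>
    have h4 : ((a ^ (n + 1))⁻¹ : Perm α) u = v := by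
      rw [← hk]; rw [zpow_negSucc]
    have h5 : (a ^ (n + 1)) v = u := by rw [← h4]; simp
    exact Setoid.symm' t (h5 ▸ key (n + 1) v)

lemma scs_le_join_left (a b : Perm α) : sameCycleSetoid a ≤ joinSetoid a b := le_sup_left

lemma scs_le_join_right (a b : Perm α) : sameCycleSetoid b ≤ joinSetoid a b := le_sup_right

lemma scs_mul_le {a b : Perm α} {s : Setoid α}
    (ha : sameCycleSetoid a ≤ s) (hb : sameCycleSetoid b ≤ s) :
    sameCycleSetoid (a * b) ≤ s := by
  apply scs_le_of_step
  intro u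
  have h1 : s u (b u) := hb (scs_apply b u)
  have h2 : s (b u) (a (b u)) := ha (scs_apply a (b u))
  exact Setoid.trans' s h1 h2

lemma scs_inv_le {a : Perm α} {s : Setoid α} (ha : sameCycleSetoid a ≤ s) :
    sameCycleSetoid a⁻¹ ≤ s := by
  apply scs_le_of_step
  intro u
  exact Setoid.symm' s (ha (⟨1, by simp⟩ : a.SameCycle (a⁻¹ u) u))

lemma card_quot_le_card [Finite α] (s : Setoid α) : Nat.card (Quotient s) ≤ Nat.card α :=
  Nat.card_le_card_of_surjective (Quotient.mk s) (fun q => q.exists_rep)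

lemma card_quot_le_of_le [Finite α] {s t : Setoid α} (h : s ≤ t) :
    Nat.card (Quotient t) ≤ Nat.card (Quotient s) := by
  apply Nat.card_le_card_of_surjective
    (Quotient.lift (fun z => (⟦z⟧ : Quotient t)) (fun u v huv => Quotient.sound (h huv)))
  intro q
  obtain ⟨w, rfl⟩ := q.exists_rep
  exact ⟨⟦w⟧, rfl⟩

lemma card_quot_congr {β : Type*} {s : Setoid α} {t : Setoid β} (e : α ≃ β)
    (h : ∀ u v, s u v ↔ t (e u) (e v)) :
    Nat.card (Quotient s) = Nat.card (Quotient t) :=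
  Nat.card_congr (Quotient.congr e h)

end Aux

section Aux2

lemma sameCycle_map {β : Type*} (e : α ≃ β) (a : Perm α) (b : Perm β)
    (h : ∀ z, e (a z) = b (e z)) {u v : α} (huv : a.SameCycle u v) :
    b.SameCycle (e u) (e v) := by
  have hpow : ∀ (n : ℕ) (z : α), e ((a ^ n) z) = (b ^ n) (e z) := by
    intro n
    induction n with
    | zero => intro z; simp
    | succ n ih =>
      intro z
      have h1 : (a ^ (n + 1)) z = a ((a ^ n) z) := by rw [pow_succ', Equiv.Perm.mul_apply]
      have h2 : (b ^ (n + 1)) (e z) = b ((b ^ n) (e z)) := by rw [pow_succ', Equiv.Perm.mul_apply]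
      rw [h1, h2, h ((a ^ n) z), ih z]
  obtain ⟨k, hk⟩ := huv
  match k, hk with
  | Int.ofNat n, hk =>
    refine ⟨(n : ℤ), ?_⟩
    have h4 : (a ^ n) u = v := by rw [← hk]; simp
    rw [zpow_natCast, ← hpow n u, h4]
  | Int.negSucc n, hk =>
    refine ⟨Int.negSucc n, ?_⟩
    have h4 : ((a ^ (n + 1))⁻¹ : Perm α) u = v := by rw [← hk]; rw [zpow_negSucc]
    have h5 : (a ^ (n + 1)) v = u := by rw [← h4]; simp
    have h6 : (b ^ (n + 1)) (e v) = e u := by rw [← hpow (n + 1) v, h5]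
    rw [zpow_negSucc]
    exact (Equiv.Perm.inv_eq_iff_eq.mpr h6.symm)

lemma numCycles_congr {β : Type*} (e : α ≃ β) (a : Perm α) (b : Perm β)
    (h : ∀ z, e (a z) = b (e z)) : numCycles a = numCycles b := by
  have h' : ∀ z, e.symm (b z) = a (e.symm z) := by
    intro z
    have := h (e.symm z)
    rw [e.apply_symm_apply] at this
    rw [← this, e.symm_apply_apply]
  apply card_quot_congr e
  intro u v
  constructor
  · exact fun huv => sameCycle_map e a b h huv
  · intro huv
    have := sameCycle_map e.symm b a h' huv
    have h2 : a.SameCycle u v := by simpa using this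
    exact h2

lemma numCycles_conj (c a : Perm α) : numCycles (c * a * c⁻¹) = numCycles a :=
  (numCycles_congr c a (c * a * c⁻¹) (fun z => by simp [Equiv.Perm.mul_apply])).symm

lemma numCycles_le_card [Finite α] (a : Perm α) : numCycles a ≤ Nat.card α :=
  card_quot_le_card _

lemma numCycles_pos [Finite α] [Nonempty α] (a : Perm α) : 0 < numCycles a := by
  have : Nonempty (Quotient (sameCycleSetoid a)) := ⟨⟦Classical.arbitrary α⟧⟩
  exact Nat.card_pos

lemma eq_one_of_numCycles_eq_card [Finite α] {g : Perm α} (h : numCycles g = Nat.card α) :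
    g = 1 := by
  by_contra hg
  obtain ⟨x, hx⟩ : ∃ x, g x ≠ x := by
    by_contra h'
    push_neg at h'
    exact hg (Equiv.ext h')
  letI := Fintype.ofFinite α
  letI := Fintype.ofFinite (Quotient (sameCycleSetoid g))
  have hsurj : Function.Surjective (Quotient.mk (sameCycleSetoid g)) := fun q => q.exists_rep
  have hninj : ¬ Function.Injective (Quotient.mk (sameCycleSetoid g)) := by
    intro hinj
    exact hx (hinj (Quotient.sound (scs_apply g x))).symm
  have hlt := Fintype.card_lt_of_surjective_not_injective _ hsurj hninj
  rw [numCycles, Nat.card_eq_fintype_card, Nat.card_eq_fintype_card] at h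
  omega

/-- The setoid `s` with the classes of `x` and `y` merged. -/
def extendS (s : Setoid α) (x y : α) : Setoid α :=
  ⟨fun u v => s u v ∨ (s u x ∧ s y v) ∨ (s u y ∧ s x v), by
    constructor
    · exact fun z => Or.inl (Setoid.refl' s z)
    · rintro u v (h1 | ⟨h1, h2⟩ | ⟨h1, h2⟩)
      · exact Or.inl (Setoid.symm' s h1)
      · exact Or.inr (Or.inr ⟨Setoid.symm' s h2, Setoid.symm' s h1⟩)
      · exact Or.inr (Or.inl ⟨Setoid.symm' s h2, Setoid.symm' s h1⟩)
    · rintro u v w (h1 | ⟨h1, h2⟩ | ⟨h1, h2⟩) (h3 | ⟨h3, h4⟩ | ⟨h3, h4⟩)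
      · exact Or.inl (Setoid.trans' s h1 h3)
      · exact Or.inr (Or.inl ⟨Setoid.trans' s h1 h3, h4⟩)
      · exact Or.inr (Or.inr ⟨Setoid.trans' s h1 h3, h4⟩)
      · exact Or.inr (Or.inl ⟨h1, Setoid.trans' s h2 h3⟩)
      · exact Or.inr (Or.inl ⟨h1, h4⟩)
      · exact Or.inl (Setoid.trans' s h1 h4)
      · exact Or.inr (Or.inr ⟨h1, Setoid.trans' s h2 h3⟩)
      · exact Or.inl (Setoid.trans' s h1 h4)
      · exact Or.inr (Or.inr ⟨h1, h4⟩)⟩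

lemma le_extendS (s : Setoid α) (x y : α) : s ≤ extendS s x y := fun _ _ h => Or.inl h

lemma extendS_rel (s : Setoid α) (x y : α) : (extendS s x y) x y :=
  Or.inr (Or.inl ⟨Setoid.refl' s x, Setoid.refl' s y⟩)

lemma extendS_le {s t : Setoid α} {x y : α} (hst : s ≤ t) (hxy : t x y) :
    extendS s x y ≤ t := by
  rintro u v (h1 | ⟨h1, h2⟩ | ⟨h1, h2⟩)
  · exact hst h1
  · exact Setoid.trans' t (hst h1) (Setoid.trans' t hxy (hst h2))
  · exact Setoid.trans' t (hst h1) (Setoid.trans' t (Setoid.symm' t hxy) (hst h2))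

lemma extendS_eq_of_rel {s : Setoid α} {x y : α} (h : s x y) : extendS s x y = s :=
  le_antisymm (extendS_le le_rfl h) (le_extendS s x y)

lemma card_extendS [Finite α] {s : Setoid α} {x y : α} (h : ¬ s x y) :
    Nat.card (Quotient (extendS s x y)) + 1 = Nat.card (Quotient s) := by
  classical
  set s' := extendS s x y with hs'
  have hxy' : (⟦x⟧ : Quotient s) ≠ ⟦y⟧ := fun he => h (Quotient.exact he)
  let f : Quotient s → Quotient s' :=
    Quotient.lift (fun z => (⟦z⟧ : Quotient s')) (fun u v huv => Quotient.sound (Or.inl huv))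
  let g : {q : Quotient s // q ≠ ⟦y⟧} → Quotient s' := fun q => f q.1
  have hg : Function.Bijective g := by
    constructor
    · rintro ⟨q, hq⟩ ⟨q', hq'⟩ he
      obtain ⟨u, rfl⟩ := q.exists_rep
      obtain ⟨v, rfl⟩ := q'.exists_rep
      have h2 : s' u v := Quotient.exact he
      rcases h2 with h2 | ⟨h2, h3⟩ | ⟨h2, h3⟩
      · exact Subtype.ext (Quotient.sound h2)
      · exact absurd (Quotient.sound (Setoid.symm' s h3)) hq'
      · exact absurd (Quotient.sound h2) hq
    · intro q
      obtain ⟨w, rfl⟩ := q.exists_rep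
      by_cases hw : s y w
      · refine ⟨⟨⟦x⟧, hxy'⟩, ?_⟩
        show (⟦x⟧ : Quotient s') = ⟦w⟧
        exact Quotient.sound (Or.inr (Or.inl ⟨Setoid.refl' s x, hw⟩))
      · exact ⟨⟨⟦w⟧, fun he => hw (Setoid.symm' s (Quotient.exact he))⟩, rfl⟩
  have hcard : Nat.card {q : Quotient s // q ≠ ⟦y⟧} = Nat.card (Quotient s') :=
    Nat.card_eq_of_bijective g hg
  letI := Fintype.ofFinite (Quotient s)
  have h1 : Nat.card {q : Quotient s // q ≠ ⟦y⟧} = Fintype.card {q : Quotient s // ¬ q = ⟦y⟧} :=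
    Nat.card_eq_fintype_card
  have h2 : Fintype.card {q : Quotient s // ¬ q = ⟦y⟧}
      = Fintype.card (Quotient s) - Fintype.card {q : Quotient s // q = ⟦y⟧} :=
    Fintype.card_subtype_compl _
  have h3 : Fintype.card {q : Quotient s // q = ⟦y⟧} = 1 := Fintype.card_subtype_eq _
  have h4 : 0 < Fintype.card (Quotient s) := Fintype.card_pos_iff.mpr ⟨⟦y⟧⟩
  have h5 : Nat.card (Quotient s) = Fintype.card (Quotient s) := Nat.card_eq_fintype_card
  omega

end Aux2

section Swap

variable [Finite α] [DecidableEq α]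

lemma not_sameCycle_of_fixed {g : Perm α} {x z : α} (h : g x = x) (hz : z ≠ x) :
    ¬ g.SameCycle x z := by
  rintro ⟨k, hk⟩
  rw [Equiv.Perm.zpow_apply_eq_self_of_apply_eq_self h k] at hk
  exact hz hk.symm

lemma scs_mul_swap_le_extendS (a : Perm α) {x y : α} :
    sameCycleSetoid (a * Equiv.swap x y) ≤ extendS (sameCycleSetoid a) x y := by
  apply scs_le_of_step
  intro u
  rcases eq_or_ne u x with rfl | hux
  · have h1 : (a * Equiv.swap u y) u = a y := by
      rw [Equiv.Perm.mul_apply, Equiv.swap_apply_left]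
    rw [h1]
    exact Or.inr (Or.inl ⟨Setoid.refl' _ u, scs_apply a y⟩)
  rcases eq_or_ne u y with rfl | huy
  · have h1 : (a * Equiv.swap x u) u = a x := by
      rw [Equiv.Perm.mul_apply, Equiv.swap_apply_right]
    rw [h1]
    exact Or.inr (Or.inr ⟨Setoid.refl' _ u, scs_apply a x⟩)
  · have h1 : (a * Equiv.swap x y) u = a u := by
      rw [Equiv.Perm.mul_apply, Equiv.swap_apply_of_ne_of_ne hux huy]
    rw [h1]
    exact Or.inl (scs_apply a u)

lemma extendS_scs_mul_swap (a : Perm α) (x y : α) :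
    extendS (sameCycleSetoid (a * Equiv.swap x y)) x y = extendS (sameCycleSetoid a) x y := by
  apply le_antisymm
  · exact extendS_le (scs_mul_swap_le_extendS a) (extendS_rel _ _ _)
  · have h2 := scs_mul_swap_le_extendS (a * Equiv.swap x y) (x := x) (y := y)
    rw [mul_assoc, Equiv.swap_mul_self, mul_one] at h2
    exact extendS_le h2 (extendS_rel _ _ _)

lemma orbit_periodic (a : Perm α) (z : α) : z ∈ Function.periodicPts a := by
  apply Function.mk_mem_periodicPts (orderOf_pos a)
  show (⇑a)^[orderOf a] z = z
  rw [← Equiv.Perm.coe_pow, pow_orderOf_eq_one]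
  rfl

lemma minimalPeriod_pos (a : Perm α) (z : α) : 0 < Function.minimalPeriod (⇑a) z :=
  Function.minimalPeriod_pos_of_mem_periodicPts (orbit_periodic a z)

lemma pow_minimalPeriod (a : Perm α) (z : α) :
    (a ^ Function.minimalPeriod (⇑a) z) z = z := by
  have := Function.isPeriodicPt_minimalPeriod (⇑a) z
  rw [Function.IsPeriodicPt, Function.IsFixedPt, ← Equiv.Perm.coe_pow] at this
  exact this

lemma pow_fixed_iff (a : Perm α) (z : α) (j : ℕ) :
    (a ^ j) z = z ↔ Function.minimalPeriod (⇑a) z ∣ j := by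
  constructor
  · intro hj
    apply Function.IsPeriodicPt.minimalPeriod_dvd
    show (⇑a)^[j] z = z
    rw [← Equiv.Perm.coe_pow]
    exact hj
  · rintro ⟨t, rfl⟩
    have h2 := (Function.isPeriodicPt_minimalPeriod (⇑a) z).mul_const t
    rw [Function.IsPeriodicPt, Function.IsFixedPt, ← Equiv.Perm.coe_pow] at h2
    exact h2

lemma sameCycle_mul_swap {a : Perm α} {x y : α} (hxy : x ≠ y)
    (h : ¬ a.SameCycle x y) : (a * Equiv.swap x y).SameCycle x y := by
  set b := a * Equiv.swap x y with hb
  set p := Function.minimalPeriod (⇑a) y with hp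
  have hppos : 0 < p := minimalPeriod_pos a y
  have hane : ∀ k, 0 < k → k < p → (a ^ k) y ≠ y := by
    intro k hk1 hk2 he
    have := (pow_fixed_iff a y k).mp he
    have := Nat.le_of_dvd hk1 this
    omega
  have hanx : ∀ k : ℕ, (a ^ k) y ≠ x := by
    intro k he
    exact h (Equiv.Perm.SameCycle.symm ⟨(k : ℤ), by rw [zpow_natCast, he]⟩)
  have key : ∀ k, 1 ≤ k → k ≤ p → (b ^ k) x = (a ^ k) y := by
    intro k
    induction k with
    | zero => omega
    | succ k ih =>
      intro _ hk
      rcases Nat.eq_zero_or_pos k with rfl | hkpos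
      · show (b ^ 1) x = (a ^ 1) y
        rw [pow_one, pow_one, hb, Equiv.Perm.mul_apply, Equiv.swap_apply_left]
      · have hik := ih hkpos (by omega)
        have h1 : (b ^ (k + 1)) x = b ((b ^ k) x) := by
          rw [pow_succ', Equiv.Perm.mul_apply]
        rw [h1, hik, hb]
        rw [Equiv.Perm.mul_apply,
          Equiv.swap_apply_of_ne_of_ne (hanx k) (hane k hkpos (by omega))]
        rw [← Equiv.Perm.mul_apply, ← pow_succ']
  have hfin : (b ^ p) x = y := by
    rw [key p hppos le_rfl]
    exact pow_minimalPeriod a y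
  exact ⟨(p : ℤ), by rw [zpow_natCast, hfin]⟩

lemma not_sameCycle_mul_swap {a : Perm α} {x y : α} (hxy : x ≠ y)
    (h : a.SameCycle x y) : ¬ (a * Equiv.swap x y).SameCycle x y := by
  set b := a * Equiv.swap x y with hb
  set p := Function.minimalPeriod (⇑a) x with hp
  have hppos : 0 < p := minimalPeriod_pos a x
  have hper : (a ^ p) x = x := pow_minimalPeriod a x
  obtain ⟨i, hiord, hix⟩ := h.exists_pow_eq'
  set d := i % p with hd
  have hdx : (a ^ d) x = y := by
    have h2 := Function.iterate_mod_minimalPeriod_eq (f := ⇑a) (x := x) (n := i)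
    rw [← Equiv.Perm.coe_pow, ← Equiv.Perm.coe_pow] at h2
    have h3 : (a ^ d) x = (a ^ i) x := by rw [hd]; exact h2
    rw [h3, hix]
  have hdpos : 0 < d := by
    rcases Nat.eq_zero_or_pos d with h0 | h1
    · rw [h0, pow_zero] at hdx
      exact absurd hdx hxy
    · exact h1
  have hdlt : d < p := Nat.mod_lt _ hppos
  have hnotx : ∀ k, 0 < k → k < p → (a ^ k) x ≠ x := by
    intro k hk1 hk2 he
    have := Nat.le_of_dvd hk1 ((pow_fixed_iff a x k).mp he)
    omega
  have key : ∀ k, 1 ≤ k → k ≤ p - d → (b ^ k) x = (a ^ (d + k)) x := by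
    intro k
    induction k with
    | zero => omega
    | succ k ih =>
      intro _ hk
      rcases Nat.eq_zero_or_pos k with rfl | hkpos
      · show (b ^ 1) x = (a ^ (d + 1)) x
        rw [pow_one, hb, Equiv.Perm.mul_apply, Equiv.swap_apply_left, ← hdx,
          ← Equiv.Perm.mul_apply, ← pow_succ']
      · have hik := ih hkpos (by omega)
        have h1 : (b ^ (k + 1)) x = b ((b ^ k) x) := by
          rw [pow_succ', Equiv.Perm.mul_apply]
        have hne1 : (a ^ (d + k)) x ≠ x := hnotx (d + k) (by omega) (by omega)
        have hne2 : (a ^ (d + k)) x ≠ y := by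
          intro he
          rw [← hdx] at he
          have h4 : (a ^ d) ((a ^ k) x) = (a ^ d) x := by
            rw [← Equiv.Perm.mul_apply, ← pow_add]
            exact he
          have h5 : (a ^ k) x = x := (a ^ d).injective h4
          have := Nat.le_of_dvd hkpos ((pow_fixed_iff a x k).mp h5)
          omega
        rw [h1, hik, hb, Equiv.Perm.mul_apply, Equiv.swap_apply_of_ne_of_ne hne1 hne2]
        rw [← Equiv.Perm.mul_apply, ← pow_succ']
        rw [← Nat.add_assoc]
  set m := p - d with hm
  have hmpos : 0 < m := by omega
  have hbm : (b ^ m) x = x := by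
    rw [key m hmpos le_rfl]
    have h6 : d + m = p := by omega
    rw [h6, hper]
  rintro hsc
  obtain ⟨j, hjord, hjx⟩ := hsc.exists_pow_eq'
  set p' := Function.minimalPeriod (⇑b) x with hp'
  have hp'pos : 0 < p' := minimalPeriod_pos b x
  have hp'dvd : p' ∣ m := by
    apply Function.IsPeriodicPt.minimalPeriod_dvd
    show (⇑b)^[m] x = x
    rw [← Equiv.Perm.coe_pow]
    exact hbm
  have hp'le : p' ≤ m := Nat.le_of_dvd hmpos hp'dvd
  set r := j % p' with hr
  have hrx : (b ^ r) x = y := by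
    have h2 := Function.iterate_mod_minimalPeriod_eq (f := ⇑b) (x := x) (n := j)
    rw [← Equiv.Perm.coe_pow, ← Equiv.Perm.coe_pow] at h2
    have h3 : (b ^ r) x = (b ^ j) x := by rw [hr]; exact h2
    rw [h3, hjx]
  rcases Nat.eq_zero_or_pos r with hr0 | hrpos
  · rw [hr0, pow_zero] at hrx
    exact hxy hrx
  · have hrlt : r < p' := Nat.mod_lt _ hp'pos
    have h7 : (b ^ r) x = (a ^ (d + r)) x := key r hrpos (by omega)
    have h8 : (a ^ (d + r)) x = (a ^ d) x := by rw [h7] at hrx; rw [hrx, hdx]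
    have h9 : (a ^ d) ((a ^ r) x) = (a ^ d) x := by
      rw [← Equiv.Perm.mul_apply, ← pow_add]
      exact h8
    have h10 : (a ^ r) x = x := (a ^ d).injective h9
    have := Nat.le_of_dvd hrpos ((pow_fixed_iff a x r).mp h10)
    omega

end Swap

section Count

variable [Finite α] [DecidableEq α]

lemma numCycles_mul_swap_not {a : Perm α} {x y : α} (hxy : x ≠ y)
    (h : ¬ a.SameCycle x y) : numCycles (a * Equiv.swap x y) + 1 = numCycles a := by
  have hb : (a * Equiv.swap x y).SameCycle x y := sameCycle_mul_swap hxy h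
  have h1 : extendS (sameCycleSetoid (a * Equiv.swap x y)) x y
      = sameCycleSetoid (a * Equiv.swap x y) := extendS_eq_of_rel hb
  have h2 := card_extendS (s := sameCycleSetoid a) (x := x) (y := y) h
  rw [← extendS_scs_mul_swap a x y, h1] at h2
  exact h2

lemma numCycles_mul_swap_same {a : Perm α} {x y : α} (hxy : x ≠ y)
    (h : a.SameCycle x y) : numCycles (a * Equiv.swap x y) = numCycles a + 1 := by
  have hb : ¬ (a * Equiv.swap x y).SameCycle x y := not_sameCycle_mul_swap hxy h
  have h1 := card_extendS (s := sameCycleSetoid (a * Equiv.swap x y)) (x := x) (y := y) hb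
  rw [extendS_scs_mul_swap a x y, extendS_eq_of_rel h] at h1
  exact h1.symm

/-- Multiplying `g` on the left by `swap x (g x)` (where `g x ≠ x`) splits a cycle. -/
lemma numCycles_swap_mul {g : Perm α} {x : α} (hx : g x ≠ x) :
    numCycles (Equiv.swap x (g x) * g) = numCycles g + 1 := by
  have h1 : Equiv.swap x (g x) * g = g * Equiv.swap (g⁻¹ x) (g⁻¹ (g x)) :=
    Equiv.swap_mul_eq_mul_swap g x (g x)
  rw [show g⁻¹ (g x) = x from g.symm_apply_apply x] at h1
  have hne : g⁻¹ x ≠ x := by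
    intro he
    have h2 := congrArg g he
    rw [show g (g⁻¹ x) = x from g.apply_symm_apply x] at h2
    exact hx h2.symm
  have hsc : g.SameCycle (g⁻¹ x) x := ⟨1, by simp⟩
  rw [h1]
  exact numCycles_mul_swap_same hne hsc

lemma numCycles_one : numCycles (1 : Perm α) = Nat.card α := by
  refine (Nat.card_eq_of_bijective (Quotient.mk (sameCycleSetoid (1 : Perm α))) ?_).symm
  constructor
  · intro u v huv
    obtain ⟨k, hk⟩ := Quotient.exact huv
    rw [one_zpow, Equiv.Perm.one_apply] at hk
    exact hk
  · exact fun q => q.exists_rep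

lemma numBlocks_self (a : Perm α) : numBlocks a a = numCycles a := by
  unfold numBlocks joinSetoid
  rw [sup_idem]
  rfl

lemma key_ineq_aux : ∀ (M : ℕ) (a b : Perm α),
    Nat.card α ≤ numCycles (a⁻¹ * b) + M →
    numCycles a + numCycles (a⁻¹ * b) + numCycles b ≤ Nat.card α + 2 * numBlocks a b := by
  intro M
  induction M with
  | zero =>
    intro a b hM
    have h1 : numCycles (a⁻¹ * b) = Nat.card α :=
      le_antisymm (numCycles_le_card _) (by omega)
    have h2 : a⁻¹ * b = 1 := eq_one_of_numCycles_eq_card h1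
    have h3 : b = a := by
      have := congrArg (a * ·) h2
      simpa [← mul_assoc] using this
    subst h3
    rw [h1, numBlocks_self]
    omega
  | succ M ih =>
    intro a b hM
    by_cases hab : a⁻¹ * b = 1
    · have h3 : b = a := by
        have := congrArg (a * ·) hab
        simpa [← mul_assoc] using this
      subst h3
      rw [hab, numCycles_one, numBlocks_self]
      omega
    · set g := a⁻¹ * b with hg
      obtain ⟨x, hx⟩ : ∃ x, g x ≠ x := by
        by_contra h'
        push_neg at h'
        exact hab (Equiv.ext h')
      set y := g x with hy
      have hxy : x ≠ y := fun he => hx he.symm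
      set τ := Equiv.swap x y with hτ
      set a' := a * τ with ha'
      have h_ainv : a'⁻¹ * b = τ * g := by
        rw [ha', mul_inv_rev, hτ, Equiv.swap_inv, mul_assoc, hg]
      have hcount : numCycles (a'⁻¹ * b) = numCycles g + 1 := by
        rw [h_ainv, hτ, hy]
        exact numCycles_swap_mul hx
      have hM' : Nat.card α ≤ numCycles (a'⁻¹ * b) + M := by
        rw [hcount]; omega
      have IH := ih a' b hM'
      -- facts about a' applications
      have hax : a x = a' y := by
        rw [ha', hτ, Equiv.Perm.mul_apply, Equiv.swap_apply_right]
      have hay : a y = a' x := by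
        rw [ha', hτ, Equiv.Perm.mul_apply, Equiv.swap_apply_left]
      have hau : ∀ u, u ≠ x → u ≠ y → a u = a' u := by
        intro u h1 h2
        rw [ha', hτ, Equiv.Perm.mul_apply, Equiv.swap_apply_of_ne_of_ne h1 h2]
      by_cases hC : a.SameCycle x y
      · -- same cycle: a' splits, blocks may split by one
        have hca : numCycles a' = numCycles a + 1 := numCycles_mul_swap_same hxy hC
        -- join bound
        set s' := joinSetoid a' b with hs'
        set T := extendS s' x y with hT
        have hstep : ∀ u, T u (a u) := by
          intro u
          rcases eq_or_ne u x with rfl | hux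
          · rw [hax]
            exact Or.inr (Or.inl ⟨Setoid.refl' s' u, scs_le_join_left a' b (scs_apply a' y)⟩)
          rcases eq_or_ne u y with rfl | huy
          · rw [hay]
            exact Or.inr (Or.inr ⟨Setoid.refl' s' y, scs_le_join_left a' b (scs_apply a' x)⟩)
          · rw [hau u hux huy]
            exact Or.inl (scs_le_join_left a' b (scs_apply a' u))
        have hsle : joinSetoid a b ≤ T := by
          apply sup_le
          · exact scs_le_of_step hstep
          · exact le_trans (scs_le_join_right a' b) (le_extendS s' x y)
        have hc1 : Nat.card (Quotient T) ≤ numBlocks a b := card_quot_le_of_le hsle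
        have hc2 : Nat.card (Quotient s') ≤ Nat.card (Quotient T) + 1 := by
          by_cases hrel : s' x y
          · rw [hT, extendS_eq_of_rel hrel]
            omega
          · have := card_extendS hrel
            rw [← hT] at this
            omega
        have hnb' : numBlocks a' b = Nat.card (Quotient s') := rfl
        omega
      · -- different cycles: a' merges, blocks only coarsen
        have hca : numCycles a' + 1 = numCycles a := numCycles_mul_swap_not hxy hC
        have hsc' : a'.SameCycle x y := sameCycle_mul_swap hxy hC
        set s' := joinSetoid a' b with hs'
        have hxy' : s' x y := scs_le_join_left a' b hsc'
        have hstep : ∀ u, s' u (a u) := by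
          intro u
          rcases eq_or_ne u x with rfl | hux
          · rw [hax]
            exact Setoid.trans' s' hxy' (scs_le_join_left a' b (scs_apply a' y))
          rcases eq_or_ne u y with rfl | huy
          · rw [hay]
            exact Setoid.trans' s' (Setoid.symm' s' hxy') (scs_le_join_left a' b (scs_apply a' x))
          · rw [hau u hux huy]
            exact scs_le_join_left a' b (scs_apply a' u)
        have hsle : joinSetoid a b ≤ s' := by
          apply sup_le
          · exact scs_le_of_step hstep
          · exact scs_le_join_right a' b
        have hc1 : Nat.card (Quotient s') ≤ numBlocks a b := card_quot_le_of_le hsle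
        have hnb' : numBlocks a' b = Nat.card (Quotient s') := rfl
        omega

lemma key_ineq (a b : Perm α) :
    numCycles a + numCycles (a⁻¹ * b) + numCycles b ≤ Nat.card α + 2 * numBlocks a b :=
  key_ineq_aux (Nat.card α) a b (by omega)

end Count

section Restrict

lemma restrictPerm_eq {a : Perm α} {p : α → Prop} (hp : ∀ z, p (a z) ↔ p z) :
    restrictPerm a p = a.subtypePerm hp := by
  have hfr : ∀ x : {x // p x}, firstReturn a p (x : α) = a (x : α) := by
    rintro ⟨x, hx⟩
    unfold firstReturn
    have h1 : 1 ∈ {k : ℕ | 0 < k ∧ p ((a ^ k) x)} := by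
      refine ⟨one_pos, ?_⟩
      rw [pow_one]
      exact (hp x).2 hx
    have h2 : sInf {k : ℕ | 0 < k ∧ p ((a ^ k) x)} = 1 := by
      have h3 := Nat.sInf_le h1
      have h4 := (Nat.sInf_mem (⟨1, h1⟩ : Set.Nonempty _)).1
      omega
    rw [h2, pow_one]
  have hex : ∃ e : Perm {x // p x}, ∀ x : {x // p x}, (e x : α) = firstReturn a p (x : α) := by
    refine ⟨a.subtypePerm hp, ?_⟩
    intro x
    rw [hfr x]
    rfl
  unfold restrictPerm
  rw [dif_pos hex]
  have hspec := hex.choose_spec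
  apply Equiv.ext
  intro x
  apply Subtype.ext
  rw [hspec x, hfr x]
  rfl

lemma sameCycle_subtypePerm {a : Perm α} {p : α → Prop} (hp : ∀ z, p (a z) ↔ p z)
    (u v : {z // p z}) : (a.subtypePerm hp).SameCycle u v ↔ a.SameCycle (u : α) (v : α) := by
  constructor
  · rintro ⟨k, hk⟩
    refine ⟨k, ?_⟩
    rw [Equiv.Perm.subtypePerm_zpow] at hk
    exact congrArg Subtype.val hk
  · rintro ⟨k, hk⟩
    refine ⟨k, ?_⟩
    rw [Equiv.Perm.subtypePerm_zpow]
    exact Subtype.ext hk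

lemma pred_iff_of_le {a : Perm α} {s : Setoid α} (h : sameCycleSetoid a ≤ s) (x0 : α) :
    ∀ z, s x0 (a z) ↔ s x0 z := by
  intro z
  have h1 : s z (a z) := h (scs_apply a z)
  exact ⟨fun hz => Setoid.trans' s hz (Setoid.symm' s h1), fun hz => Setoid.trans' s hz h1⟩

lemma numCycles_subtypePerm_congr (a : Perm α) {p p' : α → Prop} (h : ∀ z, p z ↔ p' z)
    (hp : ∀ z, p (a z) ↔ p z) (hp' : ∀ z, p' (a z) ↔ p' z) :
    numCycles (a.subtypePerm hp) = numCycles (a.subtypePerm hp') :=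
  numCycles_congr (Equiv.subtypeEquivRight h) _ _ (fun _ => Subtype.ext rfl)

lemma card_subtype_congr {p p' : α → Prop} (h : ∀ z, p z ↔ p' z) :
    Nat.card {z // p z} = Nat.card {z // p' z} :=
  Nat.card_congr (Equiv.subtypeEquivRight h)

/-- Cycle counts are additive over any coarser partition. -/
lemma numCycles_eq_sum [Fintype α] (s : Setoid α) [Fintype (Quotient s)] {a : Perm α}
    (h : sameCycleSetoid a ≤ s) :
    numCycles a = ∑ q : Quotient s, numCycles (a.subtypePerm (pred_iff_of_le h q.out)) := by
  classical
  letI : ∀ q : Quotient s,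
      Fintype (Quotient (sameCycleSetoid (a.subtypePerm (pred_iff_of_le h q.out)))) :=
    fun q => Fintype.ofFinite _
  let F : (Σ q : Quotient s,
      Quotient (sameCycleSetoid (a.subtypePerm (pred_iff_of_le h q.out)))) →
      Quotient (sameCycleSetoid a) :=
    fun w => Quotient.lift
      (fun z : {z // s (Quotient.out w.1) z} => (⟦z.1⟧ : Quotient (sameCycleSetoid a)))
      (fun u v huv => Quotient.sound
        ((sameCycle_subtypePerm (pred_iff_of_le h (Quotient.out w.1)) u v).1 (by exact huv))) w.2
  have hbij : Function.Bijective F := by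
    constructor
    · rintro ⟨q, c⟩ ⟨q', c'⟩ he
      obtain ⟨z, rfl⟩ := c.exists_rep
      obtain ⟨z', rfl⟩ := c'.exists_rep
      have h2 : a.SameCycle z.1 z'.1 := Quotient.exact he
      have h3 : s z.1 z'.1 := h h2
      have hq : q = q' := by
        rw [← q.out_eq, ← q'.out_eq]
        apply Quotient.sound
        exact Setoid.trans' s z.2 (Setoid.trans' s h3 (Setoid.symm' s z'.2))
      subst hq
      have h4 : (⟦z⟧ : Quotient (sameCycleSetoid (a.subtypePerm (pred_iff_of_le h q.out))))
          = ⟦z'⟧ := Quotient.sound ((sameCycle_subtypePerm _ z z').2 h2)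
      rw [h4]
    · intro t
      obtain ⟨z, rfl⟩ := t.exists_rep
      exact ⟨⟨⟦z⟧, ⟦⟨z, Quotient.mk_out z⟩⟧⟩, rfl⟩
  have hcard := Nat.card_eq_of_bijective F hbij
  rw [numCycles, ← hcard]
  rw [Nat.card_eq_fintype_card, Fintype.card_sigma]
  congr 1
  funext q
  rw [numCycles, Nat.card_eq_fintype_card]

/-- The ambient cardinality is additive over the blocks of a partition. -/
lemma card_eq_sum [Fintype α] (s : Setoid α) [Fintype (Quotient s)] :
    Nat.card α = ∑ q : Quotient s, Nat.card {z // s q.out z} := by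
  classical
  letI : ∀ q : Quotient s, Fintype {z // s q.out z} := fun q => Fintype.ofFinite _
  let G : (Σ q : Quotient s, {z // s q.out z}) → α := fun w => w.2.1
  have hbij : Function.Bijective G := by
    constructor
    · rintro ⟨q, z, hz⟩ ⟨q', z', hz'⟩ he
      simp only [G] at he
      subst he
      have hq : q = q' := by
        rw [← q.out_eq, ← q'.out_eq]
        exact Quotient.sound (Setoid.trans' s hz (Setoid.symm' s hz'))
      subst hq
      rfl
    · intro z
      exact ⟨⟨⟦z⟧, z, Quotient.mk_out z⟩, rfl⟩
  have hcard := Nat.card_eq_of_bijective G hbij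
  rw [← hcard, Nat.card_eq_fintype_card, Fintype.card_sigma]
  congr 1
  funext q
  rw [Nat.card_eq_fintype_card]

lemma numBlocks_eq_sum [Fintype α] (a b : Perm α) [Fintype (Quotient (joinSetoid a b))] :
    numBlocks a b = ∑ _q : Quotient (joinSetoid a b), 1 := by
  rw [numBlocks, Nat.card_eq_fintype_card, Finset.sum_const, smul_eq_mul, mul_one,
    Finset.card_univ]

end Restrict

section Blocks

lemma subtypePerm_inv_mul (a b : Perm α) {p : α → Prop}
    (ha : ∀ z, p (a z) ↔ p z) (hb : ∀ z, p (b z) ↔ p z) (hab : ∀ z, p ((a⁻¹ * b) z) ↔ p z) :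
    (a.subtypePerm ha)⁻¹ * b.subtypePerm hb = (a⁻¹ * b).subtypePerm hab := by
  rw [Equiv.Perm.inv_subtypePerm, Equiv.Perm.subtypePerm_mul]

lemma joinTop_restrict (a b : Perm α) (x0 : α)
    (ha : ∀ z, (joinSetoid a b) x0 (a z) ↔ (joinSetoid a b) x0 z)
    (hb : ∀ z, (joinSetoid a b) x0 (b z) ↔ (joinSetoid a b) x0 z) :
    JoinTop (a.subtypePerm ha) (b.subtypePerm hb) := by
  set s := joinSetoid a b with hs
  set j := joinSetoid (a.subtypePerm ha) (b.subtypePerm hb) with hj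
  have hU : Equivalence (fun z w =>
      s z w ∧ ∀ (hz : s x0 z) (hw : s x0 w), j ⟨z, hz⟩ ⟨w, hw⟩) := by
    constructor
    · intro z
      exact ⟨Setoid.refl' s z, fun hz hw => Setoid.refl' j ⟨z, hz⟩⟩
    · rintro z w ⟨h1, h2⟩
      exact ⟨Setoid.symm' s h1, fun hz hw => Setoid.symm' j (h2 hw hz)⟩
    · rintro z w v ⟨h1, h2⟩ ⟨h3, h4⟩
      refine ⟨Setoid.trans' s h1 h3, fun hz hv => ?_⟩
      have hw : s x0 w := Setoid.trans' s hz h1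
      exact Setoid.trans' j (h2 hz hw) (h4 hw hv)
  set U : Setoid α := ⟨_, hU⟩ with hUdef
  have hua : sameCycleSetoid a ≤ U := by
    apply scs_le_of_step
    intro u
    refine ⟨scs_le_join_left a b (scs_apply a u), fun hz hw => ?_⟩
    have h5 : (a.subtypePerm ha).SameCycle ⟨u, hz⟩ ⟨a u, hw⟩ :=
      ⟨1, by rw [zpow_one]; exact Subtype.ext rfl⟩
    exact scs_le_join_left _ _ h5
  have hub : sameCycleSetoid b ≤ U := by
    apply scs_le_of_step
    intro u
    refine ⟨scs_le_join_right a b (scs_apply b u), fun hz hw => ?_⟩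
    have h5 : (b.subtypePerm hb).SameCycle ⟨u, hz⟩ ⟨b u, hw⟩ :=
      ⟨1, by rw [zpow_one]; exact Subtype.ext rfl⟩
    exact scs_le_join_right _ _ h5
  have hle : s ≤ U := sup_le hua hub
  rintro ⟨u, hu⟩ ⟨v, hv⟩
  have h6 : s u v := Setoid.trans' s (Setoid.symm' s hu) hv
  exact ((hle h6).2 hu hv : _)

lemma numBlocks_eq_one {β : Type*} [Finite β] [Nonempty β] {f g : Perm β}
    (h : JoinTop f g) : numBlocks f g = 1 := by
  rw [numBlocks, Nat.card_eq_one_iff_unique]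
  constructor
  · constructor
    intro q q'
    obtain ⟨u, rfl⟩ := q.exists_rep
    obtain ⟨v, rfl⟩ := q'.exists_rep
    exact Quotient.sound (by exact h u v)
  · exact ⟨⟦Classical.arbitrary β⟧⟩

lemma numCycles_of_isEmpty [IsEmpty α] (g : Perm α) : numCycles g = 0 := by
  have h : IsEmpty (Quotient (sameCycleSetoid g)) := by
    constructor
    intro q
    obtain ⟨z, rfl⟩ := q.exists_rep
    exact isEmptyElim z
  exact Nat.card_of_isEmpty

lemma scs_inv_mul_join (a b : Perm α) : sameCycleSetoid (a⁻¹ * b) ≤ joinSetoid a b :=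
  scs_mul_le (scs_inv_le (scs_le_join_left a b)) (scs_le_join_right a b)

lemma numBlocks_le_right [Finite α] (a b : Perm α) : numBlocks a b ≤ numCycles b :=
  card_quot_le_of_le (scs_le_join_right a b)

end Blocks

section Part3

variable [Fintype α] [DecidableEq α]

lemma SNC_restrict_iff (a b : Perm α) (x0 : α) :
    SNC (restrictPerm b ((joinSetoid a b).r x0)) (restrictPerm a ((joinSetoid a b).r x0)) ↔
      numCycles (a.subtypePerm (pred_iff_of_le (scs_le_join_left a b) x0)) +
        numCycles ((a⁻¹ * b).subtypePerm (pred_iff_of_le (scs_inv_mul_join a b) x0)) +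
        numCycles (b.subtypePerm (pred_iff_of_le (scs_le_join_right a b) x0)) =
      Nat.card {z // (joinSetoid a b).r x0 z} + 2 := by
  have hpa : ∀ z, (joinSetoid a b).r x0 (a z) ↔ (joinSetoid a b).r x0 z :=
    pred_iff_of_le (scs_le_join_left a b) x0
  have hpb : ∀ z, (joinSetoid a b).r x0 (b z) ↔ (joinSetoid a b).r x0 z :=
    pred_iff_of_le (scs_le_join_right a b) x0
  have hpab : ∀ z, (joinSetoid a b).r x0 ((a⁻¹ * b) z) ↔ (joinSetoid a b).r x0 z :=
    pred_iff_of_le (scs_inv_mul_join a b) x0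
  rw [restrictPerm_eq hpa, restrictPerm_eq hpb]
  unfold SNC
  rw [subtypePerm_inv_mul a b hpa hpb hpab]
  have hjt : JoinTop (a.subtypePerm hpa) (b.subtypePerm hpb) := joinTop_restrict a b x0 hpa hpb
  constructor
  · rintro ⟨-, h2⟩
    exact h2
  · intro h2
    exact ⟨hjt, h2⟩

lemma numeric_transport (a b : Perm α) (x0 x1 : α) (hrel : (joinSetoid a b) x0 x1) :
    (numCycles (a.subtypePerm (pred_iff_of_le (scs_le_join_left a b) x0)) +
        numCycles ((a⁻¹ * b).subtypePerm (pred_iff_of_le (scs_inv_mul_join a b) x0)) +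
        numCycles (b.subtypePerm (pred_iff_of_le (scs_le_join_right a b) x0)) =
      Nat.card {z // (joinSetoid a b).r x0 z} + 2) ↔
    (numCycles (a.subtypePerm (pred_iff_of_le (scs_le_join_left a b) x1)) +
        numCycles ((a⁻¹ * b).subtypePerm (pred_iff_of_le (scs_inv_mul_join a b) x1)) +
        numCycles (b.subtypePerm (pred_iff_of_le (scs_le_join_right a b) x1)) =
      Nat.card {z // (joinSetoid a b).r x1 z} + 2) := by
  have hiff : ∀ z, (joinSetoid a b).r x0 z ↔ (joinSetoid a b).r x1 z := fun z =>
    ⟨fun hz => Setoid.trans' _ (Setoid.symm' _ hrel) hz, fun hz => Setoid.trans' _ hrel hz⟩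
  rw [numCycles_subtypePerm_congr a hiff (pred_iff_of_le (scs_le_join_left a b) x0)
      (pred_iff_of_le (scs_le_join_left a b) x1),
    numCycles_subtypePerm_congr (a⁻¹ * b) hiff (pred_iff_of_le (scs_inv_mul_join a b) x0)
      (pred_iff_of_le (scs_inv_mul_join a b) x1),
    numCycles_subtypePerm_congr b hiff (pred_iff_of_le (scs_le_join_right a b) x0)
      (pred_iff_of_le (scs_le_join_right a b) x1),
    card_subtype_congr hiff]

lemma global_eq_iff_ncRel [Nonempty α] (a b : Perm α) :
    (numCycles a + numCycles (a⁻¹ * b) + numCycles b = Nat.card α + 2 * numBlocks a b)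
      ↔ ncRel a b := by
  classical
  letI : Fintype (Quotient (joinSetoid a b)) := Fintype.ofFinite _
  have hsa := numCycles_eq_sum (a := a) (joinSetoid a b) (scs_le_join_left a b)
  have hsab := numCycles_eq_sum (a := a⁻¹ * b) (joinSetoid a b) (scs_inv_mul_join a b)
  have hsb := numCycles_eq_sum (a := b) (joinSetoid a b) (scs_le_join_right a b)
  have hsn := card_eq_sum (joinSetoid a b)
  have hnb := numBlocks_eq_sum a b
  have hble : ∀ q : Quotient (joinSetoid a b),
      numCycles (a.subtypePerm (pred_iff_of_le (scs_le_join_left a b) q.out)) +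
        numCycles ((a⁻¹ * b).subtypePerm (pred_iff_of_le (scs_inv_mul_join a b) q.out)) +
        numCycles (b.subtypePerm (pred_iff_of_le (scs_le_join_right a b) q.out)) ≤
      Nat.card {z // (joinSetoid a b) q.out z} + 2 := by
    intro q
    have hpa := pred_iff_of_le (scs_le_join_left a b) q.out
    have hpb := pred_iff_of_le (scs_le_join_right a b) q.out
    have hpab := pred_iff_of_le (scs_inv_mul_join a b) q.out
    have hkey := key_ineq (a.subtypePerm hpa) (b.subtypePerm hpb)
    rw [subtypePerm_inv_mul a b hpa hpb hpab] at hkey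
    have hne : Nonempty {z // (joinSetoid a b) q.out z} :=
      ⟨⟨q.out, Setoid.refl' _ _⟩⟩
    have h1 : numBlocks (a.subtypePerm hpa) (b.subtypePerm hpb) = 1 :=
      numBlocks_eq_one (joinTop_restrict a b q.out hpa hpb)
    rw [h1] at hkey
    exact hkey
  have hsum : numCycles a + numCycles (a⁻¹ * b) + numCycles b =
      ∑ q : Quotient (joinSetoid a b),
        (numCycles (a.subtypePerm (pred_iff_of_le (scs_le_join_left a b) q.out)) +
          numCycles ((a⁻¹ * b).subtypePerm (pred_iff_of_le (scs_inv_mul_join a b) q.out)) +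
          numCycles (b.subtypePerm (pred_iff_of_le (scs_le_join_right a b) q.out))) := by
    rw [hsa, hsab, hsb, ← Finset.sum_add_distrib, ← Finset.sum_add_distrib]
  have hsum2 : Nat.card α + 2 * numBlocks a b =
      ∑ q : Quotient (joinSetoid a b), (Nat.card {z // (joinSetoid a b) q.out z} + 2) := by
    rw [hsn, hnb, Finset.mul_sum, ← Finset.sum_add_distrib]
    simp only [mul_one]
  rw [hsum, hsum2, Finset.sum_eq_sum_iff_of_le (fun q _ => hble q)]
  constructor
  · intro h x
    rw [SNC_restrict_iff a b x]
    have hrel : (joinSetoid a b) (⟦x⟧ : Quotient (joinSetoid a b)).out x := Quotient.mk_out x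
    rw [← numeric_transport a b (⟦x⟧ : Quotient (joinSetoid a b)).out x hrel]
    exact h ⟦x⟧ (Finset.mem_univ _)
  · intro h q _
    exact (SNC_restrict_iff a b q.out).1 (h q.out)

end Part3

section Sums

variable [Fintype α] [DecidableEq α]

lemma le'_sum (g π : Perm α) (h1 : ∀ x y : α, π.SameCycle x y → g.SameCycle x y)
    (h2 : ∀ x : α, numCycles (restrictPerm π (g.SameCycle x)) +
      numCycles ((restrictPerm π (g.SameCycle x))⁻¹ * restrictPerm g (g.SameCycle x)) =
      Nat.card {y // g.SameCycle x y} + 1) :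
    numCycles π + numCycles (π⁻¹ * g) = Nat.card α + numCycles g := by
  classical
  letI : Fintype (Quotient (sameCycleSetoid g)) := Fintype.ofFinite _
  have hle : sameCycleSetoid π ≤ sameCycleSetoid g := fun x y hxy => h1 x y hxy
  have hleg : sameCycleSetoid (π⁻¹ * g) ≤ sameCycleSetoid g :=
    scs_mul_le (scs_inv_le hle) le_rfl
  have hsa := numCycles_eq_sum (a := π) (sameCycleSetoid g) hle
  have hsb := numCycles_eq_sum (a := π⁻¹ * g) (sameCycleSetoid g) hleg
  have hsn := card_eq_sum (sameCycleSetoid g)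
  have hng : numCycles g = ∑ _q : Quotient (sameCycleSetoid g), 1 := by
    rw [numCycles, Nat.card_eq_fintype_card, Finset.sum_const, smul_eq_mul, mul_one,
      Finset.card_univ]
  have hq : ∀ q : Quotient (sameCycleSetoid g),
      numCycles (π.subtypePerm (pred_iff_of_le hle q.out)) +
        numCycles ((π⁻¹ * g).subtypePerm (pred_iff_of_le hleg q.out)) =
      Nat.card {z // (sameCycleSetoid g) q.out z} + 1 := by
    intro q
    have hpπ : ∀ z, g.SameCycle q.out (π z) ↔ g.SameCycle q.out z :=
      pred_iff_of_le hle q.out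
    have hpg : ∀ z, g.SameCycle q.out (g z) ↔ g.SameCycle q.out z :=
      pred_iff_of_le le_rfl q.out
    have hpπg : ∀ z, g.SameCycle q.out ((π⁻¹ * g) z) ↔ g.SameCycle q.out z :=
      pred_iff_of_le hleg q.out
    have h := h2 q.out
    rw [restrictPerm_eq hpπ, restrictPerm_eq hpg, subtypePerm_inv_mul π g hpπ hpg hpπg] at h
    exact h
  rw [hsa, hsb, hsn, hng, ← Finset.sum_add_distrib, ← Finset.sum_add_distrib]
  exact Finset.sum_congr rfl (fun q _ => hq q)

lemma ncRel_sum (π γ : Perm α) (h : ncRel π γ) :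
    numCycles π + numCycles (π⁻¹ * γ) + numCycles γ = Nat.card α + 2 * numBlocks π γ := by
  classical
  letI : Fintype (Quotient (joinSetoid π γ)) := Fintype.ofFinite _
  have hsa := numCycles_eq_sum (a := π) (joinSetoid π γ) (scs_le_join_left π γ)
  have hsab := numCycles_eq_sum (a := π⁻¹ * γ) (joinSetoid π γ) (scs_inv_mul_join π γ)
  have hsb := numCycles_eq_sum (a := γ) (joinSetoid π γ) (scs_le_join_right π γ)
  have hsn := card_eq_sum (joinSetoid π γ)
  have hnb := numBlocks_eq_sum π γ
  have hq : ∀ q : Quotient (joinSetoid π γ),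
      numCycles (π.subtypePerm (pred_iff_of_le (scs_le_join_left π γ) q.out)) +
        numCycles ((π⁻¹ * γ).subtypePerm (pred_iff_of_le (scs_inv_mul_join π γ) q.out)) +
        numCycles (γ.subtypePerm (pred_iff_of_le (scs_le_join_right π γ) q.out)) =
      Nat.card {z // (joinSetoid π γ).r q.out z} + 2 :=
    fun q => (SNC_restrict_iff π γ q.out).1 (h q.out)
  rw [hsa, hsab, hsb, hsn, hnb, Finset.mul_sum, ← Finset.sum_add_distrib,
    ← Finset.sum_add_distrib, ← Finset.sum_add_distrib]
  simp only [mul_one]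
  exact Finset.sum_congr rfl (fun q _ => hq q)

end Sums

/-- for `σ ∈ S_NC(m₁,…,m_r)`, `π ≤ σ⁻¹γ` and `π ≲ γ`:
`|σ| + |σ⁻¹γπ⁻¹| = |γπ⁻¹| + 2(#(π ∨ γ) − 1)`, and
`|γπ⁻¹| + 2(#(γπ⁻¹) − #(σ ∨ γπ⁻¹)) ≤ |σ| + |σ⁻¹γπ⁻¹|`, with equality iff
`σ` is non-crossing on each block of `σ ∨ γπ⁻¹` with respect to `γπ⁻¹`. -/
theorem stmt6 {r : ℕ} (m : Fin r → ℕ)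
    (γ : Equiv.Perm ((i : Fin r) × Fin (m i))) (hγ : γ = blockRotate m)
    (σ π : Equiv.Perm ((i : Fin r) × Fin (m i)))
    (hσ : SNC γ σ) (hπ1 : le' π (σ⁻¹ * γ)) (hπ2 : ncRel π γ) :
    len σ + len (σ⁻¹ * (γ * π⁻¹)) = len (γ * π⁻¹) + 2 * (numBlocks π γ - 1) ∧
    len (γ * π⁻¹) + 2 * (numCycles (γ * π⁻¹) - numBlocks σ (γ * π⁻¹)) ≤
      len σ + len (σ⁻¹ * (γ * π⁻¹)) ∧
    (len (γ * π⁻¹) + 2 * (numCycles (γ * π⁻¹) - numBlocks σ (γ * π⁻¹)) =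
        len σ + len (σ⁻¹ * (γ * π⁻¹)) ↔ ncRel σ (γ * π⁻¹)) := by
  have hne : Nonempty ((i : Fin r) × Fin (m i)) := by
    by_contra h
    rw [not_nonempty_iff] at h
    have h0 := hσ.2
    rw [numCycles_of_isEmpty, numCycles_of_isEmpty, numCycles_of_isEmpty,
      Nat.card_of_isEmpty] at h0
    omega
  have E1 := hσ.2
  have E2 := le'_sum (σ⁻¹ * γ) π hπ1.1 hπ1.2
  have E4 := ncRel_sum π γ hπ2
  have E3 : numCycles (σ⁻¹ * (γ * π⁻¹)) = numCycles (π⁻¹ * (σ⁻¹ * γ)) := by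
    have hconj : π * (π⁻¹ * (σ⁻¹ * γ)) * π⁻¹ = σ⁻¹ * (γ * π⁻¹) := by group
    rw [← hconj, numCycles_conj]
  have E5 : numCycles (γ * π⁻¹) = numCycles (π⁻¹ * γ) := by
    have hconj : π * (π⁻¹ * γ) * π⁻¹ = γ * π⁻¹ := by group
    rw [← hconj, numCycles_conj]
  have B1 := numCycles_le_card σ
  have B2 := numCycles_le_card (σ⁻¹ * (γ * π⁻¹))
  have B3 := numCycles_le_card (γ * π⁻¹)
  have B4 : 1 ≤ numBlocks π γ := by
    have h4 : Nonempty (Quotient (joinSetoid π γ)) := ⟨⟦Classical.arbitrary _⟧⟩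
    exact Nat.card_pos
  have B5 : numBlocks σ (γ * π⁻¹) ≤ numCycles (γ * π⁻¹) := numBlocks_le_right _ _
  have KEY := key_ineq σ (γ * π⁻¹)
  have P3 := global_eq_iff_ncRel σ (γ * π⁻¹)
  refine ⟨?_, ?_, ?_⟩
  · simp only [len]
    omega
  · simp only [len]
    omega
  · rw [← P3]
    simp only [len]
    constructor
    · intro h
      omega
    · intro h
      omega

end ThirdOrderFree
end

section
/- Let n = 2r₁ + ⋯ + 2r_m, γ = γ_{2r₁,…,2r_m} ∈ S_n the product of m consecutive directed cycles of lengths 2rᵢ, and O = {1, 3, …, n−1} the set of odd numbers in [n]. Suppose π ∈ S_n is parity reversing, i.e. π(k) and k have opposite parity for all k. Then γπ⁻¹ separates the points of O if and only if π(2k) = γ(2k) for every k with 2k ≤ n. -/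
open Equiv

namespace ThirdOrderFree

variable {α : Type*}

lemma finRotate_parity {n : ℕ} (hn : n % 2 = 0) (j : Fin n) :
    ((finRotate n j : Fin n) : ℕ) % 2 ≠ (j : ℕ) % 2 := by
  cases n with
  | zero => exact j.elim0
  | succ k =>
    rw [coe_finRotate]
    split
    · next h => subst h; simp only [Fin.val_last]; omega
    · next h =>
      have : (j : ℕ) < k := by
        have := j.isLt
        rcases Nat.lt_or_ge (j : ℕ) k with h' | h'
        · exact h'
        · exact absurd (Fin.ext (by simp only [Fin.val_last]; omega) : j = Fin.last k) h
      omega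

lemma blockRotate_parity {m : ℕ} (r : Fin m → ℕ)
    (x : (i : Fin m) × Fin (2 * r i)) :
    ((blockRotate (fun i => 2 * r i) x).2 : ℕ) % 2 ≠ (x.2 : ℕ) % 2 := by
  obtain ⟨i, j⟩ := x
  exact finRotate_parity (by omega) j

/-- for a parity-reversing `π`, `γπ⁻¹` separates the odd positions `O`
iff `π(2k) = γ(2k)` for all even positions `2k`. (Global position within each block of
even length `2 rᵢ` is `j + 1` plus an even offset, so odd positions are those with
`j` even, and even positions those with `j` odd.) -/
theorem stmt13 (m : ℕ) (r : Fin m → ℕ)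
    (γ : Equiv.Perm ((i : Fin m) × Fin (2 * r i)))
    (hγ : γ = blockRotate (fun i => 2 * r i))
    (π : Equiv.Perm ((i : Fin m) × Fin (2 * r i)))
    (hpar : ∀ x, (π x).2.val % 2 ≠ x.2.val % 2) :
    Separates (γ * π⁻¹) {x | x.2.val % 2 = 0} ↔
      ∀ x : (i : Fin m) × Fin (2 * r i), x.2.val % 2 = 1 → π x = γ x := by
  have hγpar : ∀ z : (i : Fin m) × Fin (2 * r i),
      ((γ z).2 : ℕ) % 2 ≠ (z.2 : ℕ) % 2 := by
    rw [hγ]; exact blockRotate_parity r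
  constructor
  · intro hsep y hy
    have hx : ((π y).2 : ℕ) % 2 = 0 := by have := hpar y; omega
    have heq : (γ * π⁻¹) (π y) = γ y := by
      simp [Perm.mul_apply]
    have hmem : (((γ * π⁻¹) (π y)).2 : ℕ) % 2 = 0 := by
      rw [heq]
      have := hγpar y
      omega
    have hcy : (γ * π⁻¹).SameCycle (π y) ((γ * π⁻¹) (π y)) := ⟨1, by simp⟩
    have hsepres := hsep (π y) hx _ hmem hcy
    rw [heq] at hsepres
    exact hsepres
  · intro h x hx y hy hcy
    have hfix : ∀ z : (i : Fin m) × Fin (2 * r i),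
        (z.2 : ℕ) % 2 = 0 → (γ * π⁻¹) z = z := by
      intro z hz
      have hodd : ((π⁻¹ z).2 : ℕ) % 2 = 1 := by
        have h1 := hpar (π⁻¹ z)
        rw [show π (π⁻¹ z) = z from Equiv.apply_symm_apply π z] at h1
        omega
      have h2 := h (π⁻¹ z) hodd
      calc (γ * π⁻¹) z = γ (π⁻¹ z) := rfl
        _ = π (π⁻¹ z) := h2.symm
        _ = z := Equiv.apply_symm_apply π z
    obtain ⟨k, hk⟩ := hcy
    have hfx : Function.IsFixedPt (γ * π⁻¹) x := hfix x hx
    exact ((hfx.perm_zpow k).symm).trans hk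


end ThirdOrderFree
end

section
/- Let n = 2r₁+⋯+2r_m, γ = γ_{2r₁,…,2r_m}, O the odd numbers in [n]. For π ∈ S_n parity reversing with γπ⁻¹ separating O, define the half π̌ ∈ S_{r₁+⋯+r_m} by π̌(k) = π(π(2k))/2. Then: (1) #(π) = #(π̌); (2) γ π⁻¹(2k) = 2l if and only if γ_{r₁,…,r_m} π̌⁻¹(k) = l; (3) #(γ_{r₁,…,r_m} π̌⁻¹) + (r₁+⋯+r_m) = #(γ π⁻¹). -/
open Equiv

namespace ThirdOrderFree

variable {α : Type*}

private lemma semiconj_pow {α β : Type*} {f : α → β} {a : Perm α} {b : Perm β}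
    (h : ∀ x, f (a x) = b (f x)) : ∀ (n : ℕ) (x : α), f ((a ^ n) x) = (b ^ n) (f x) := by
  intro n
  induction n with
  | zero => intro x; simp
  | succ n ih =>
    intro x
    rw [pow_succ, pow_succ, Perm.mul_apply, Perm.mul_apply, ih, h]

theorem Perm.apply_inv_self {β : Type*} (e : Perm β) (x : β) : e (e⁻¹ x) = x :=
  e.apply_symm_apply x

theorem Perm.inv_apply_self {β : Type*} (e : Perm β) (x : β) : e⁻¹ (e x) = x :=
  e.symm_apply_apply x

private lemma semiconj_zpow {α β : Type*} {f : α → β} {a : Perm α} {b : Perm β}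
    (h : ∀ x, f (a x) = b (f x)) : ∀ (k : ℤ) (x : α), f ((a ^ k) x) = (b ^ k) (f x) := by
  have hinv : ∀ x, f (a⁻¹ x) = b⁻¹ (f x) := fun x =>
    b.injective (by rw [← h, Perm.apply_inv_self, Perm.apply_inv_self])
  intro k x
  cases k with
  | ofNat n => simpa using semiconj_pow h n x
  | negSucc n => simpa [zpow_negSucc, ← inv_pow] using semiconj_pow hinv (n + 1) x

private lemma finRotate_val {n : ℕ} (x : Fin n) : (finRotate n x).val = (x.val + 1) % n := by
  cases n with
  | zero => exact x.elim0
  | succ n =>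
    rw [coe_finRotate]
    split
    · next h => rw [h]; simp [Fin.val_last, Nat.mod_self]
    · next h =>
      have := Fin.val_lt_last h
      rw [Nat.mod_eq_of_lt (by omega)]

private lemma blockRotate_apply {m : ℕ} (n : Fin m → ℕ) (x : (i : Fin m) × Fin (n i)) :
    blockRotate n x = ⟨x.1, finRotate _ x.2⟩ := rfl

private lemma mod_calc {R v : ℕ} (hv : v < R) :
    2 * ((v + 1) % R) + 1 = ((2 * v + 1 + 1) % (2 * R) + 1) % (2 * R) := by
  rcases Nat.lt_or_ge (v + 1) R with h | h
  · rw [Nat.mod_eq_of_lt h, Nat.mod_eq_of_lt (by omega : 2 * v + 1 + 1 < 2 * R),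
      Nat.mod_eq_of_lt (by omega)]
    omega
  · have he : v + 1 = R := by omega
    subst he
    rw [Nat.mod_self, show 2 * v + 1 + 1 = 2 * (v + 1) by ring,
      Nat.mod_self, Nat.mod_eq_of_lt (by omega)]

private lemma sigma_ext {m : ℕ} {n : Fin m → ℕ} {x y : (i : Fin m) × Fin (n i)}
    (h1 : x.1 = y.1) (h2 : x.2.val = y.2.val) : x = y := by
  obtain ⟨i, u⟩ := x; obtain ⟨j, v⟩ := y
  dsimp at h1 h2; subst h1
  exact congrArg (Sigma.mk i) (Fin.ext h2)

/-- properties of the half `π̌` of a parity-reversing separating `π`.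
`dbl` identifies `(i, u)` with the `u`-th even position of block `i`, and `πh = π̌`
is characterised by `dbl (π̌ k) = π(π(2k))` (i.e. `π̌ k = π(π(2k))/2`). -/
theorem stmt14 (m : ℕ) (r : Fin m → ℕ)
    (γ : Equiv.Perm ((i : Fin m) × Fin (2 * r i)))
    (hγ : γ = blockRotate (fun i => 2 * r i))
    (π : Equiv.Perm ((i : Fin m) × Fin (2 * r i)))
    (hpar : ∀ x, (π x).2.val % 2 ≠ x.2.val % 2)
    (hsep : Separates (γ * π⁻¹) {x | x.2.val % 2 = 0})
    (dbl : ((i : Fin m) × Fin (r i)) → ((i : Fin m) × Fin (2 * r i)))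
    (hdbl : ∀ x, dbl x = ⟨x.1, ⟨2 * x.2.val + 1, by have := x.2.isLt; omega⟩⟩)
    (πh : Equiv.Perm ((i : Fin m) × Fin (r i)))
    (hπh : ∀ x, dbl (πh x) = π (π (dbl x))) :
    numCycles π = numCycles πh ∧
    (∀ x y, (blockRotate r * πh⁻¹) x = y ↔ (γ * π⁻¹) (dbl x) = dbl y) ∧
    numCycles (blockRotate r * πh⁻¹) + Nat.card ((i : Fin m) × Fin (r i)) =
      numCycles (γ * π⁻¹) := by
  classical
  have h2r : ∀ (i : Fin m) (v : Fin (2 * r i)), (v.val + 1) % (2 * r i) < 2 * r i :=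
    fun i v => Nat.mod_lt _ (lt_of_le_of_lt (Nat.zero_le _) v.isLt)
  have hγap : ∀ x : ((i : Fin m) × Fin (2 * r i)), γ x = ⟨x.1, ⟨(x.2.val + 1) % (2 * r x.1),
      h2r x.1 x.2⟩⟩ := by
    intro x
    rw [hγ, blockRotate_apply]
    exact congrArg (Sigma.mk x.1) (Fin.ext (finRotate_val x.2))
  have hγmk : ∀ (i : Fin m) (v : Fin (2 * r i)),
      γ ⟨i, v⟩ = ⟨i, ⟨(v.val + 1) % (2 * r i), h2r i v⟩⟩ := fun i v => hγap ⟨i, v⟩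
  have hγval : ∀ x : ((i : Fin m) × Fin (2 * r i)),
      (γ x).2.val = (x.2.val + 1) % (2 * r x.1) := by
    intro x; rw [hγap]
  have hγfst : ∀ x : ((i : Fin m) × Fin (2 * r i)), (γ x).1 = x.1 := by
    intro x; rw [hγap]
  have hγpar : ∀ x : ((i : Fin m) × Fin (2 * r i)), (γ x).2.val % 2 ≠ x.2.val % 2 := by
    intro x
    rw [hγval]
    rcases Nat.lt_or_ge (x.2.val + 1) (2 * r x.1) with h | h
    · rw [Nat.mod_eq_of_lt h]; omega
    · have hlt := x.2.isLt
      have he : x.2.val + 1 = 2 * r x.1 := by omega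
      rw [he, Nat.mod_self]; omega
  have hdblmk : ∀ (i : Fin m) (u : Fin (r i)),
      dbl ⟨i, u⟩ = ⟨i, ⟨2 * u.val + 1, by have := u.isLt; omega⟩⟩ := fun i u => hdbl ⟨i, u⟩
  have hdbloddv : ∀ z : ((i : Fin m) × Fin (r i)), (dbl z).2.val = 2 * z.2.val + 1 := by
    intro z; rw [hdbl z]
  have hdblodd : ∀ z : ((i : Fin m) × Fin (r i)), (dbl z).2.val % 2 = 1 := by
    intro z; rw [hdbloddv]; omega
  have hdblfst : ∀ z : ((i : Fin m) × Fin (r i)), (dbl z).1 = z.1 := by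
    intro z; rw [hdbl z]
  have hdblinj : Function.Injective dbl := by
    intro a b hab
    obtain ⟨i, u⟩ := a; obtain ⟨j, v⟩ := b
    rw [hdblmk, hdblmk] at hab
    obtain ⟨h1, h2⟩ := Sigma.mk.inj_iff.mp hab
    subst h1
    refine congrArg (Sigma.mk i) (Fin.ext ?_)
    have h3 : 2 * u.val + 1 = 2 * v.val + 1 := congrArg Fin.val (eq_of_heq h2)
    omega
  have hodd_surj : ∀ x : ((i : Fin m) × Fin (2 * r i)), x.2.val % 2 = 1 →
      ∃ z : ((i : Fin m) × Fin (r i)), dbl z = x := by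
    intro x hx
    obtain ⟨i, v⟩ := x
    refine ⟨⟨i, ⟨v.val / 2, by have := v.isLt; simp at hx; omega⟩⟩, ?_⟩
    rw [hdblmk]
    exact congrArg (Sigma.mk i) (Fin.ext (by simp at hx ⊢; omega))
  have hfix : ∀ x : ((i : Fin m) × Fin (2 * r i)), x.2.val % 2 = 0 → (γ * π⁻¹) x = x := by
    intro x hx
    have h1 : (π⁻¹ x).2.val % 2 = 1 := by
      have := hpar (π⁻¹ x)
      rw [Perm.apply_inv_self] at this
      omega
    have h2 : ((γ * π⁻¹) x).2.val % 2 = 0 := by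
      have := hγpar (π⁻¹ x)
      rw [Perm.mul_apply]
      omega
    exact (hsep x hx ((γ * π⁻¹) x) h2 ⟨1, by rw [zpow_one]⟩).symm
  have hπodd : ∀ z : ((i : Fin m) × Fin (r i)), π (dbl z) = γ (dbl z) := by
    intro z
    have he : (γ (dbl z)).2.val % 2 = 0 := by
      have h1 := hγpar (dbl z)
      have h2 := hdblodd z
      omega
    have hf := hfix (γ (dbl z)) he
    rw [Perm.mul_apply] at hf
    have h3 : π⁻¹ (γ (dbl z)) = dbl z := γ.injective hf
    have h4 := congrArg π h3
    rw [Perm.apply_inv_self] at h4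
    exact h4.symm
  have hdblrot : ∀ z : ((i : Fin m) × Fin (r i)),
      dbl (blockRotate r z) = γ (γ (dbl z)) := by
    intro z
    obtain ⟨i, u⟩ := z
    have hb : blockRotate r ⟨i, u⟩ = ⟨i, finRotate (r i) u⟩ := rfl
    rw [hb, hdblmk, hdblmk, hγmk, hγmk]
    refine congrArg (Sigma.mk i) (Fin.ext ?_)
    dsimp only
    rw [finRotate_val]
    exact mod_calc u.isLt
  have hsemi : ∀ x : ((i : Fin m) × Fin (r i)),
      dbl ((blockRotate r * πh⁻¹) x) = (γ * π⁻¹) (dbl x) := by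
    intro x
    have hz : dbl x = π (π (dbl (πh⁻¹ x))) := by rw [← hπh, Perm.apply_inv_self]
    rw [Perm.mul_apply, Perm.mul_apply, hdblrot, hz, Perm.inv_apply_self, hπodd]
  have part2 : ∀ x y, (blockRotate r * πh⁻¹) x = y ↔ (γ * π⁻¹) (dbl x) = dbl y := by
    intro x y
    constructor
    · rintro rfl; exact (hsemi x).symm
    · intro h; exact hdblinj (by rw [hsemi x, h])
  refine ⟨?_, part2, ?_⟩
  · -- part 1 : numCycles π = numCycles πh
    have h2z : (2 : ZMod 2) = 0 := by decide
    have key1 : ∀ a b : ZMod 2, a ≠ b → a = b + 1 := by decide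
    have key2 : ∀ a b : ZMod 2, a = b + 1 → b = a + 1 := by decide
    have hstep : ∀ x : ((i : Fin m) × Fin (2 * r i)),
        ((π x).2.val : ZMod 2) = (x.2.val : ZMod 2) + 1 := by
      intro x
      refine key1 _ _ ?_
      rw [Ne, ZMod.natCast_eq_natCast_iff' _ _ 2]
      exact hpar x
    have hstepinv : ∀ x : ((i : Fin m) × Fin (2 * r i)),
        ((π⁻¹ x).2.val : ZMod 2) = (x.2.val : ZMod 2) + 1 := by
      intro x
      have h := hstep (π⁻¹ x)
      rw [Perm.apply_inv_self] at h
      exact key2 _ _ h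
    have hzpow : ∀ (k : ℤ) (x : ((i : Fin m) × Fin (2 * r i))),
        (((π ^ k) x).2.val : ZMod 2) = (x.2.val : ZMod 2) + k := by
      intro k
      induction k using Int.induction_on with
      | zero => intro x; rw [zpow_zero]; simp
      | succ n ih =>
        intro x
        rw [zpow_add_one, Perm.mul_apply, ih, hstep]
        push_cast; ring
      | pred n ih =>
        intro x
        rw [zpow_sub_one, Perm.mul_apply, ih, hstepinv]
        push_cast
        linear_combination h2z
    have hPdbl : ∀ z : ((i : Fin m) × Fin (r i)), (((dbl z).2.val : ℕ) : ZMod 2) = 1 := by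
      intro z
      rw [hdbloddv]
      push_cast
      linear_combination (z.2.val : ZMod 2) * h2z
    have heven : ∀ (k : ℤ) (x y : ((i : Fin m) × Fin (r i))),
        (π ^ k) (dbl x) = dbl y → ∃ j : ℤ, k = 2 * j := by
      intro k x y hk
      have h1 := hzpow k (dbl x)
      rw [hk, hPdbl, hPdbl] at h1
      have h2 : ((k : ℤ) : ZMod 2) = 0 := by linear_combination -h1
      exact (ZMod.intCast_zmod_eq_zero_iff_dvd k 2).mp h2
    have hsc2 : ∀ (k : ℤ) (z : ((i : Fin m) × Fin (r i))),
        dbl ((πh ^ k) z) = (π ^ (2 * k)) (dbl z) := by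
      intro k z
      have base : ∀ w, dbl (πh w) = (π * π) (dbl w) := fun w => by
        rw [Perm.mul_apply]; exact hπh w
      have h2 : (π * π : Perm _) ^ k = π ^ (2 * k) := by rw [← zpow_two, ← zpow_mul]
      rw [semiconj_zpow base k z, h2]
    have f1wd : ∀ a b : ((i : Fin m) × Fin (r i)),
        πh.SameCycle a b → π.SameCycle (dbl a) (dbl b) := by
      rintro a b ⟨k, hk⟩
      exact ⟨2 * k, by rw [← hsc2, hk]⟩
    have hbij : Function.Bijective (Quotient.map' dbl f1wd :
        Quotient (sameCycleSetoid πh) → Quotient (sameCycleSetoid π)) := by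
      constructor
      · intro qa qb hq
        induction qa using Quotient.inductionOn' with | h a =>
        induction qb using Quotient.inductionOn' with | h b =>
        change (Quotient.mk'' (dbl a) : Quotient (sameCycleSetoid π)) = Quotient.mk'' (dbl b) at hq
        have hab : π.SameCycle (dbl a) (dbl b) := Quotient.exact' hq
        obtain ⟨k, hk⟩ := hab
        obtain ⟨j, rfl⟩ := heven k a b hk
        exact Quotient.sound' ⟨j, hdblinj (by rw [hsc2]; exact hk)⟩
      · intro qz
        induction qz using Quotient.inductionOn' with | h z =>
        rcases Nat.mod_two_eq_zero_or_one z.2.val with hz | hz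
        · have hπz : (π z).2.val % 2 = 1 := by have := hpar z; omega
          obtain ⟨x, hx⟩ := hodd_surj (π z) hπz
          refine ⟨Quotient.mk'' x, ?_⟩
          change (Quotient.mk'' (dbl x) : Quotient (sameCycleSetoid π)) = _
          refine Quotient.sound' ?_
          rw [hx]
          exact ⟨-1, by rw [zpow_neg_one]; exact Perm.inv_apply_self π z⟩
        · obtain ⟨x, hx⟩ := hodd_surj z hz
          exact ⟨Quotient.mk'' x, by
            change (Quotient.mk'' (dbl x) : Quotient (sameCycleSetoid π)) = _; rw [hx]⟩
    exact (Nat.card_eq_of_bijective _ hbij).symm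
  · -- part 3
    let evn : ((i : Fin m) × Fin (r i)) → ((i : Fin m) × Fin (2 * r i)) :=
      fun b => ⟨b.1, ⟨2 * b.2.val, by have := b.2.isLt; omega⟩⟩
    have hevnval : ∀ b, (evn b).2.val = 2 * b.2.val := fun b => rfl
    have hevnfst : ∀ b, (evn b).1 = b.1 := fun b => rfl
    have hevn_even : ∀ b, (evn b).2.val % 2 = 0 := by
      intro b; rw [hevnval]; omega
    have hevninj : Function.Injective evn := by
      intro a b h
      obtain ⟨i, u⟩ := a; obtain ⟨j, v⟩ := b
      obtain ⟨h1, h2⟩ := Sigma.mk.inj_iff.mp h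
      subst h1
      refine congrArg (Sigma.mk i) (Fin.ext ?_)
      have h3 : 2 * u.val = 2 * v.val := congrArg Fin.val (eq_of_heq h2)
      omega
    have g2wd : ∀ a b : ((i : Fin m) × Fin (r i)),
        (blockRotate r * πh⁻¹).SameCycle a b → (γ * π⁻¹).SameCycle (dbl a) (dbl b) := by
      rintro a b ⟨k, hk⟩
      exact ⟨k, by rw [← semiconj_zpow hsemi k a, hk]⟩
    have hfixz : ∀ (k : ℤ) (b : ((i : Fin m) × Fin (r i))),
        ((γ * π⁻¹) ^ k) (evn b) = evn b := fun k b =>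
      Function.IsFixedPt.perm_zpow (hfix (evn b) (hevn_even b)) k
    have hbij : Function.Bijective (Sum.elim (fun b => Quotient.mk'' (evn b))
        (Quotient.map' dbl g2wd) : ((i : Fin m) × Fin (r i)) ⊕
          Quotient (sameCycleSetoid (blockRotate r * πh⁻¹)) →
          Quotient (sameCycleSetoid (γ * π⁻¹))) := by
      constructor
      · rintro (b | qx) (b' | qy) h
        · simp only [Sum.elim_inl] at h
          have hcyc : (γ * π⁻¹).SameCycle (evn b) (evn b') := Quotient.exact' h
          exact congrArg Sum.inl (hevninj (hsep (evn b) (hevn_even b) (evn b')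
            (hevn_even b') hcyc))
        · exfalso
          induction qy using Quotient.inductionOn' with | h y =>
          simp only [Sum.elim_inl, Sum.elim_inr, Quotient.map'_mk''] at h
          obtain ⟨k, hk⟩ := (Quotient.exact' h : (γ * π⁻¹).SameCycle (evn b) (dbl y))
          rw [hfixz] at hk
          have h1 := hdblodd y
          have h2 := hevn_even b
          have h3 := congrArg (fun w : ((i : Fin m) × Fin (2 * r i)) => w.2.val % 2) hk
          omega
        · exfalso
          induction qx using Quotient.inductionOn' with | h x =>
          simp only [Sum.elim_inl, Sum.elim_inr, Quotient.map'_mk''] at h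
          obtain ⟨k, hk⟩ := (Quotient.exact' h.symm : (γ * π⁻¹).SameCycle (evn b') (dbl x))
          rw [hfixz] at hk
          have h1 := hdblodd x
          have h2 := hevn_even b'
          have h3 := congrArg (fun w : ((i : Fin m) × Fin (2 * r i)) => w.2.val % 2) hk
          omega
        · induction qx using Quotient.inductionOn' with | h x =>
          induction qy using Quotient.inductionOn' with | h y =>
          simp only [Sum.elim_inr, Quotient.map'_mk''] at h
          obtain ⟨k, hk⟩ := (Quotient.exact' h : (γ * π⁻¹).SameCycle (dbl x) (dbl y))
          have hs := semiconj_zpow hsemi k x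
          exact congrArg Sum.inr (Quotient.sound' ⟨k, hdblinj (hs.trans hk)⟩)
      · intro q
        induction q using Quotient.inductionOn' with | h z =>
        rcases Nat.mod_two_eq_zero_or_one z.2.val with hz | hz
        · obtain ⟨i, v⟩ := z
          have hz' : v.val % 2 = 0 := hz
          refine ⟨Sum.inl ⟨i, ⟨v.val / 2, by have := v.isLt; omega⟩⟩, ?_⟩
          simp only [Sum.elim_inl]
          refine congrArg Quotient.mk'' (sigma_ext rfl ?_)
          show 2 * (v.val / 2) = v.val
          omega
        · obtain ⟨x, hx⟩ := hodd_surj z hz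
          exact ⟨Sum.inr (Quotient.mk'' x),
            by
              change (Quotient.mk'' (dbl x) : Quotient (sameCycleSetoid (γ * π⁻¹))) = _
              rw [hx]⟩
    have hcard := Nat.card_eq_of_bijective _ hbij
    rw [Nat.card_sum] at hcard
    show Nat.card (Quotient (sameCycleSetoid (blockRotate r * πh⁻¹))) +
      Nat.card ((i : Fin m) × Fin (r i)) =
      Nat.card (Quotient (sameCycleSetoid (γ * π⁻¹)))
    omega


end ThirdOrderFree
end
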